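/- For every t > 0, every p > 0 and every unit vector ξ ∈ 𝕊^{n−1} ∩ S^⊥, the integral ∫₀¹ |√Q e^{αtBᵀ} ξ|^p dα is strictly positive. -/

import Mathlib

open Matrix MeasureTheory

/-- The canonical Euclidean norm on `ℝⁿ`. -/
noncomputable def enorm {n : ℕ} (v : Fin n → ℝ) : ℝ := Real.sqrt (∑ i, v i ^ 2)

/-- The canonical Euclidean scalar product on `ℝⁿ`. -/
def euclInner {n : ℕ} (u v : Fin n → ℝ) : ℝ := ∑ i, u i * v i

/-- Membership in `S = ⋂_{j=0}^{n-1} Ker(√Q (Bᵀ)^j)`, where `sq` stands for `√Q`. -/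
def memS (n : ℕ) (B sq : Matrix (Fin n) (Fin n) ℝ) (η : Fin n → ℝ) : Prop :=
  ∀ j < n, (sq * Bᵀ ^ j).mulVec η = 0

/-- Membership in `S^⊥`, the Euclidean orthogonal complement of `S`. -/
def memSperp (n : ℕ) (B sq : Matrix (Fin n) (Fin n) ℝ) (ξ₀ : Fin n → ℝ) : Prop :=
  ∀ η : Fin n → ℝ, memS n B sq η → euclInner ξ₀ η = 0

/-- Membership in `V_k^⊥`, where `V_k = ⋂_{j=0}^{k} Ker(√Q (Bᵀ)^j)`. -/
def memVperp (n : ℕ) (B sq : Matrix (Fin n) (Fin n) ℝ) (k : ℕ) (ξ₀ : Fin n → ℝ) : Prop :=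
  ∀ η : Fin n → ℝ, (∀ j ≤ k, (sq * Bᵀ ^ j).mulVec η = 0) → euclInner ξ₀ η = 0

/-- The index `k_{ξ₀} = min {0 ≤ k ≤ r : ξ₀ ∈ V_k^⊥}` of a vector `ξ₀ ∈ S^⊥`. -/
noncomputable def kIndex (n : ℕ) (B sq : Matrix (Fin n) (Fin n) ℝ) (r : ℕ)
    (ξ₀ : Fin n → ℝ) : ℕ :=
  sInf {k | k ≤ r ∧ memVperp n B sq k ξ₀}

/-- `r` is the smallest integer such that `S = ⋂_{j=0}^{r} Ker(√Q (Bᵀ)^j)`. -/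
def IsSmallestr (n : ℕ) (B sq : Matrix (Fin n) (Fin n) ℝ) (r : ℕ) : Prop :=
  IsLeast {k | ∀ η : Fin n → ℝ,
    (∀ j ≤ k, (sq * Bᵀ ^ j).mulVec η = 0) ↔ memS n B sq η} r

/-- The positive semidefinite square root (as in the older Mathlib). -/
noncomputable def Matrix.PosSemidef.sqrt {n : Type*} [Fintype n] [DecidableEq n] {A : Matrix n n ℝ}
    (hA : A.PosSemidef) : Matrix n n ℝ :=
  hA.1.eigenvectorUnitary.1 * diagonal ((↑) ∘ (√·) ∘ hA.1.eigenvalues) *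
    (star hA.1.eigenvectorUnitary : Matrix n n ℝ)

/-- The symbol `a_t(ξ) = (1/2) ∫₀¹ |√Q e^{α t Bᵀ} ξ|^{2s} dα`. -/
noncomputable def symb (n : ℕ) (B sq : Matrix (Fin n) (Fin n) ℝ) (s t : ℝ)
    (ξ : Fin n → ℝ) : ℝ :=
  (1 / 2) * ∫ α in (0:ℝ)..1, _root_.enorm ((sq * NormedSpace.exp ((α * t) • Bᵀ)).mulVec ξ) ^ (2 * s)

section Aux

attribute [local instance] Matrix.linftyOpNormedAddCommGroup Matrix.linftyOpNormedRing
  Matrix.linftyOpNormedAlgebra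

open NormedSpace

/-- `M ↦ M.mulVec ξ` as a continuous linear map. -/
noncomputable def mvCLM (n : ℕ) (ξ : Fin n → ℝ) :
    Matrix (Fin n) (Fin n) ℝ →L[ℝ] (Fin n → ℝ) :=
  LinearMap.toContinuousLinearMap
    { toFun := fun M => M.mulVec ξ
      map_add' := fun M N => Matrix.add_mulVec M N ξ
      map_smul' := fun c M => Matrix.smul_mulVec c M ξ }

lemma mvCLM_apply {n : ℕ} (ξ : Fin n → ℝ) (M : Matrix (Fin n) (Fin n) ℝ) :
    mvCLM n ξ M = M.mulVec ξ := rfl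

lemma expcont {n : ℕ} (A sq : Matrix (Fin n) (Fin n) ℝ) (ξ : Fin n → ℝ) :
    Continuous fun α : ℝ => (sq * exp (α • A)).mulVec ξ := by
  have h1 : Continuous fun α : ℝ => exp (α • A) :=
    exp_continuous.comp (continuous_id.smul continuous_const)
  exact (mvCLM n ξ).continuous.comp (continuous_const.mul h1)

lemma key {n : ℕ} (A sq : Matrix (Fin n) (Fin n) ℝ) (ξ : Fin n → ℝ)
    (h : ∀ α ∈ Set.Ioo (0:ℝ) 1, (sq * exp (α • A)).mulVec ξ = 0) :
    ∀ j : ℕ, (sq * A ^ j).mulVec ξ = 0 := by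
  have main : ∀ j : ℕ, ∀ α ∈ Set.Ioo (0:ℝ) 1,
      (sq * A ^ j * exp (α • A)).mulVec ξ = 0 := by
    intro j
    induction j with
    | zero => intro α hα; simpa using h α hα
    | succ j ih =>
      intro α hα
      have h1 : HasDerivAt (fun β : ℝ => exp (β • A)) (exp (α • A) * A) α :=
        hasDerivAt_exp_smul_const A α
      have h2 := h1.const_mul (sq * A ^ j)
      have hd : HasDerivAt (fun β : ℝ => mvCLM n ξ (sq * A ^ j * exp (β • A)))
          (mvCLM n ξ (sq * A ^ j * (exp (α • A) * A))) α :=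
        (mvCLM n ξ).hasFDerivAt.comp_hasDerivAt α h2
      have hev : (fun β : ℝ => mvCLM n ξ (sq * A ^ j * exp (β • A)))
          =ᶠ[nhds α] (fun _ => (0 : Fin n → ℝ)) :=
        Filter.eventuallyEq_of_mem (isOpen_Ioo.mem_nhds hα)
          (fun β hβ => by simpa [mvCLM_apply] using ih β hβ)
      have hz : HasDerivAt (fun β : ℝ => mvCLM n ξ (sq * A ^ j * exp (β • A))) 0 α :=
        (hasDerivAt_const α (0 : Fin n → ℝ)).congr_of_eventuallyEq hev
      have hu := hd.unique hz
      have hcomm : exp (α • A) * A = A * exp (α • A) :=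
        (((Commute.refl A).smul_left α).exp_left).eq
      rw [hcomm] at hu
      rw [mvCLM_apply] at hu
      have : sq * A ^ j * (A * exp (α • A)) = sq * A ^ (j + 1) * exp (α • A) := by
        rw [pow_succ]; noncomm_ring
      rw [this] at hu
      exact hu
  intro j
  have hc : Continuous fun α : ℝ => (sq * A ^ j * exp (α • A)).mulVec ξ := expcont A (sq * A ^ j) ξ
  have hne : (nhdsWithin (0:ℝ) (Set.Ioo (0:ℝ) 1)).NeBot := by
    rw [← mem_closure_iff_nhdsWithin_neBot, closure_Ioo one_ne_zero.symm]
    exact ⟨le_refl 0, zero_le_one⟩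
  have ht1 : Filter.Tendsto (fun α : ℝ => (sq * A ^ j * exp (α • A)).mulVec ξ)
      (nhdsWithin 0 (Set.Ioo (0:ℝ) 1)) (nhds ((sq * A ^ j * exp ((0:ℝ) • A)).mulVec ξ)) :=
    (hc.continuousAt).continuousWithinAt
  have ht2 : Filter.Tendsto (fun α : ℝ => (sq * A ^ j * exp (α • A)).mulVec ξ)
      (nhdsWithin 0 (Set.Ioo (0:ℝ) 1)) (nhds 0) := by
    refine Filter.Tendsto.congr' ?_ tendsto_const_nhds
    filter_upwards [self_mem_nhdsWithin] with β hβ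
    exact (main j β hβ).symm
  have := tendsto_nhds_unique ht1 ht2
  simpa [zero_smul, exp_zero] using this


/-- For every `t > 0`, `p > 0` and unit vector `ξ ∈ 𝕊^{n−1} ∩ S^⊥`,
`∫₀¹ |√Q e^{αtBᵀ} ξ|^p dα > 0`. -/
theorem statement17 (n : ℕ) (hn : 1 ≤ n)
    (B Q : Matrix (Fin n) (Fin n) ℝ) (hQ : Q.PosSemidef) :
    ∀ t : ℝ, 0 < t → ∀ p : ℝ, 0 < p →
      ∀ ξ : Fin n → ℝ, _root_.enorm ξ = 1 → memSperp n B hQ.sqrt ξ →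
        0 < ∫ α in (0:ℝ)..1,
          _root_.enorm ((hQ.sqrt * NormedSpace.exp ((α * t) • Bᵀ)).mulVec ξ) ^ p := by
  intro t ht p hp ξ hξ hperp
  set sq := hQ.sqrt with hsq
  have henorm_cont : Continuous (_root_.enorm (n := n)) :=
    Real.continuous_sqrt.comp (continuous_finset_sum _ fun i _ => (continuous_apply i).pow 2)
  have hst : ∀ α : ℝ, (α * t) • Bᵀ = α • (t • Bᵀ) := fun α => by rw [smul_smul]
  have hg : Continuous fun α : ℝ => (sq * NormedSpace.exp ((α * t) • Bᵀ)).mulVec ξ := by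
    simp_rw [hst]
    exact expcont (t • Bᵀ) sq ξ
  set f : ℝ → ℝ := fun α => _root_.enorm ((sq * NormedSpace.exp ((α * t) • Bᵀ)).mulVec ξ) ^ p with hf
  have hfc : Continuous f := continuous_iff_continuousAt.2 fun α =>
    (Real.continuousAt_rpow_const _ p (Or.inr hp.le)).comp (henorm_cont.comp hg).continuousAt
  have hfnn : ∀ α, 0 ≤ f α := fun α => Real.rpow_nonneg (Real.sqrt_nonneg _) p
  have hex : ∃ α₀ ∈ Set.Ioo (0:ℝ) 1, 0 < f α₀ := by
    by_contra hcon
    push_neg at hcon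
    have hzero : ∀ α ∈ Set.Ioo (0:ℝ) 1,
        (sq * NormedSpace.exp (α • (t • Bᵀ))).mulVec ξ = 0 := by
      intro α hα
      have h0 : f α = 0 := le_antisymm (hcon α hα) (hfnn α)
      have hen : _root_.enorm ((sq * NormedSpace.exp ((α * t) • Bᵀ)).mulVec ξ) = 0 :=
        ((Real.rpow_eq_zero_iff_of_nonneg (Real.sqrt_nonneg _)).1 h0).1
      have hsum0 : ∑ i, ((sq * NormedSpace.exp ((α * t) • Bᵀ)).mulVec ξ i) ^ 2 = 0 :=
        le_antisymm (Real.sqrt_eq_zero'.1 hen)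
          (Finset.sum_nonneg fun i _ => sq_nonneg _)
      have hv : (sq * NormedSpace.exp ((α * t) • Bᵀ)).mulVec ξ = 0 := by
        funext i
        have := (Finset.sum_eq_zero_iff_of_nonneg fun i _ => sq_nonneg
          ((sq * NormedSpace.exp ((α * t) • Bᵀ)).mulVec ξ i)).1 hsum0 i (Finset.mem_univ i)
        exact pow_eq_zero_iff two_ne_zero |>.1 this
      rw [hst] at hv
      exact hv
    have hS : memS n B sq ξ := by
      intro j hj
      have hk := key (t • Bᵀ) sq ξ hzero j
      rw [smul_pow, mul_smul_comm, Matrix.smul_mulVec] at hk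
      have ht' : (t:ℝ) ^ j ≠ 0 := pow_ne_zero j ht.ne'
      exact (smul_eq_zero.1 hk).resolve_left ht'
    have h1 := hperp ξ hS
    have h2 : euclInner ξ ξ = 1 := by
      have hsum : ∑ i, ξ i ^ 2 = 1 := by
        have hnn : (0:ℝ) ≤ ∑ i, ξ i ^ 2 := Finset.sum_nonneg fun i _ => sq_nonneg _
        have := Real.sq_sqrt hnn
        rw [show Real.sqrt (∑ i, ξ i ^ 2) = 1 from hξ] at this
        simpa using this.symm
      simpa [euclInner, pow_two] using hsum
    rw [h1] at h2
    exact one_ne_zero h2.symm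
  obtain ⟨α₀, hα₀, hfα₀⟩ := hex
  rw [intervalIntegral.integral_pos_iff_support_of_nonneg_ae
      (Filter.Eventually.of_forall hfnn) (hfc.intervalIntegrable 0 1)]
  refine ⟨zero_lt_one, ?_⟩
  have hopen : IsOpen (f ⁻¹' Set.Ioi 0 ∩ Set.Ioo 0 1) := (isOpen_Ioi.preimage hfc).inter isOpen_Ioo
  have hsub : f ⁻¹' Set.Ioi 0 ∩ Set.Ioo 0 1 ⊆ Function.support f ∩ Set.Ioc 0 1 := fun x hx =>
    ⟨ne_of_gt hx.1, Set.Ioo_subset_Ioc_self hx.2⟩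
  exact lt_of_lt_of_le (hopen.measure_pos volume ⟨α₀, hfα₀, hα₀⟩) (measure_mono hsub)

end Aux
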